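/- arXiv:2303.02533 — 3 statements merged into one kernel-verified Lean document; each statement's English description precedes it below -/
import Mathlib

section
/- Let G be a group, H ≤ G a subgroup, and x, x₁, …, x_t ∈ G such that the right coset H*x is contained in the union of the left cosets x₁*H ∪ … ∪ x_t*H. Then the subgroup H ∩ x*H*x⁻¹ = {h ∈ H : x⁻¹*h*x ∈ H} has finite index in H. -/
/-- If the right coset `H*x` is covered by finitely many left cosets `xᵢ*H`, then
`{h ∈ H : x⁻¹*h*x ∈ H}` has finite index in `H`. -/
theorem stmt5 {G : Type*} [Group G] (H : Subgroup G) (x : G) (t : ℕ) (xs : Fin t → G)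
    (hcov : {y : G | ∃ h ∈ H, y = h * x} ⊆ ⋃ i : Fin t, {y : G | ∃ h ∈ H, y = xs i * h}) :
    (Subgroup.comap ((MulAut.conj x⁻¹).toMonoidHom.comp H.subtype) H).FiniteIndex := by
  set K := Subgroup.comap ((MulAut.conj x⁻¹).toMonoidHom.comp H.subtype) H with hK
  have hmem : ∀ h : H, ∃ i : Fin t, ∃ k ∈ H, (h : G) * x = xs i * k := by
    intro h
    have hx : (h : G) * x ∈ ⋃ i : Fin t, {y : G | ∃ h ∈ H, y = xs i * h} :=
      hcov ⟨h, h.2, rfl⟩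
    simpa using hx
  choose f k hkH hfk using hmem
  have hKmem : ∀ a : H, a ∈ K ↔ x⁻¹ * (a : G) * x ∈ H := by
    intro a
    simp [hK, Subgroup.mem_comap, mul_assoc]
  have key : ∀ a b : H, f a = f b → a⁻¹ * b ∈ K := by
    intro a b hab
    rw [hKmem]
    have hcalc : x⁻¹ * ((a⁻¹ * b : H) : G) * x = (k a)⁻¹ * k b := by
      have ha := hfk a
      have hb := hfk b
      rw [hab] at ha
      have : (xs (f b))⁻¹ * ((a : G) * x) = k a := by rw [ha]; group
      calc x⁻¹ * ((a⁻¹ * b : H) : G) * x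
          = ((a : G) * x)⁻¹ * ((b : G) * x) := by push_cast; group
        _ = (k a)⁻¹ * k b := by rw [ha, hb]; group
    rw [hcalc]
    exact mul_mem (inv_mem (hkH a)) (hkH b)
  have hF : Function.Injective (fun q : H ⧸ K => f q.out) := by
    intro q1 q2 h
    have := key _ _ h
    rw [← QuotientGroup.out_eq' q1, ← QuotientGroup.out_eq' q2]
    exact (QuotientGroup.eq).2 this
  have : Finite (H ⧸ K) := Finite.of_injective _ hF
  exact Subgroup.finiteIndex_of_finite_quotient
end

section
/- Let X be a Hausdorff topological space and f : X → X an injective map. Suppose S is a set of bijections of X, each commuting with f, such that for every point x ∈ X and every open neighborhood U of x there exists g ∈ S with x ∈ supp(g) ⊆ U, where supp(g) = {y : g y ≠ y}. Then f is the identity map. -/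
/-- If `f` is an injective self-map of a Hausdorff space commuting with a family of
bijections whose supports form a neighborhood basis at every point, then `f = id`. -/
theorem stmt10 {X : Type*} [TopologicalSpace X] [T2Space X]
    (f : X → X) (hf : Function.Injective f) (S : Set (Equiv.Perm X))
    (hcomm : ∀ g ∈ S, ∀ x, f (g x) = g (f x))
    (hloc : ∀ x : X, ∀ U : Set X, IsOpen U → x ∈ U →
      ∃ g ∈ S, x ∈ {y | g y ≠ y} ∧ {y | g y ≠ y} ⊆ U) :
    ∀ x, f x = x := by
  intro x
  by_contra hne
  obtain ⟨U, V, hU, hV, hxU, hfxV, hUV⟩ := t2_separation (Ne.symm hne)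
  obtain ⟨g, hgS, hxg, hsub⟩ := hloc x U hU hxU
  have hfx : f x ∈ {y | g y ≠ y} := by
    intro h
    apply hxg
    apply hf
    rw [hcomm g hgS x, show g (f x) = f x from h]
  exact Set.disjoint_left.mp hUV (hsub hfx) hfxV
end

section
/- Let x and f be commuting self-homeomorphisms of the closed interval [0,1] with x(0) = 0. Suppose t₀ ∈ [0,1] with t₀ < x(t₀), and suppose f(t) = t for every t outside the open interval (t₀, x(t₀)). Then f is the identity. -/
/-- Commuting self-homeomorphisms of `[0,1]`: if `x(0) = 0`, `t₀ < x(t₀)` and `f`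
fixes every point outside the open interval `(t₀, x(t₀))`, then `f` is the identity. -/
theorem stmt11 (x f : Homeomorph unitInterval unitInterval)
    (hcomm : ∀ t, x (f t) = f (x t)) (hx0 : x 0 = 0)
    (t₀ : unitInterval) (ht₀ : t₀ < x t₀)
    (hfix : ∀ t : unitInterval, ¬(t₀ < t ∧ t < x t₀) → f t = t) :
    ∀ t, f t = t := by
  haveI : Fact ((0:ℝ) ≤ 1) := ⟨zero_le_one⟩
  have hbot : (⊥ : unitInterval) = 0 := rfl
  have hmono : StrictMono x := by
    apply x.continuous.strictMono_of_inj_boundedOrder _ x.injective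
    rw [hbot, hx0, ← hbot]; exact bot_le
  intro t
  by_cases h : t₀ < t ∧ t < x t₀
  · set s := x.symm t with hs
    have hxs : x s = t := x.apply_symm_apply t
    have hst₀ : s < t₀ := by
      have := h.2; rw [← hxs] at this
      exact hmono.lt_iff_lt.mp this
    have hfs : f s = s := hfix s (fun hc => absurd hc.1 (not_lt.mpr hst₀.le))
    calc f t = f (x s) := by rw [hxs]
    _ = x (f s) := (hcomm s).symm
    _ = x s := by rw [hfs]
    _ = t := hxs
  · exact hfix t h
end
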